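/- A max-average constraint system has a solution over ℚ ∪ {-∞} if and only if the corresponding lifted system of inequalities over the field of Puiseux series has a solution in nonnegative Puiseux series. -/

import Mathlib

noncomputable section

/-- The field of (generalized) real Puiseux series, modeled as Hahn series over `ℚᵒᵈ`
(so that the leading term has the *largest* exponent, matching the "t large" convention). -/
abbrev K : Type := HahnSeries ℚᵒᵈ ℝ

/-- The leading coefficient of a Puiseux series (0 for the zero series). -/
noncomputable def leadCoeff (x : K) : ℝ := x.coeff x.order

/-- `x ≥ 0` in the ordered field of Puiseux series: leading coefficient is `≥ 0`. -/
def Knonneg (x : K) : Prop := 0 ≤ leadCoeff x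

/-- The order relation on Puiseux series. -/
def Kle (x y : K) : Prop := Knonneg (y - x)

/-- The valuation (leading exponent) of a Puiseux series, `⊥ = -∞` for the zero series. -/
noncomputable def val (x : K) : WithBot ℚ :=
  open scoped Classical in
  if x = 0 then ⊥ else (OrderDual.ofDual x.order : ℚ)

/-- The monomial `t^r`. -/
noncomputable def tmon (r : ℚ) : K := HahnSeries.single (OrderDual.toDual r) (1 : ℝ)

/-- `t^v` for `v ∈ ℚ ∪ {-∞}`, with `t^{-∞} = 0`. -/
noncomputable def tmonBot (v : WithBot ℚ) : K := WithBot.recBotCoe 0 tmon v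

lemma order_eq_of {w : K} {d : ℚᵒᵈ} (h1 : ∀ s, s < d → w.coeff s = 0) (h2 : w.coeff d ≠ 0) :
    w.order = d := by
  have hw : w ≠ 0 := fun h => h2 (by simp [h])
  refine le_antisymm (HahnSeries.order_le_of_coeff_ne_zero h2) ?_
  by_contra h
  push_neg at h
  exact (HahnSeries.coeff_order_eq_zero.not.2 hw) (h1 _ h)

lemma knonneg_of_pos {w : K} (d : ℚᵒᵈ) (h1 : ∀ s, s < d → w.coeff s = 0)
    (h2 : 0 < w.coeff d) : Knonneg w := by
  have := order_eq_of h1 h2.ne'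
  unfold Knonneg leadCoeff
  rw [this]
  exact h2.le

lemma knonneg_of_forall {w : K} (d : ℚᵒᵈ) (h1 : ∀ s, s < d → w.coeff s = 0)
    (h2 : 0 ≤ w.coeff d) (h3 : ∀ s, d < s → 0 ≤ w.coeff s) : Knonneg w := by
  by_cases hw : w = 0
  · simp [Knonneg, hw, leadCoeff]
  · have hod : d ≤ w.order := by
      by_contra h
      push_neg at h
      exact (HahnSeries.coeff_order_eq_zero.not.2 hw) (h1 _ h)
    rcases eq_or_lt_of_le hod with h | h
    · unfold Knonneg leadCoeff
      rw [← h]; exact h2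
    · exact h3 _ h

lemma tmonBot_coeff (v : WithBot ℚ) (s : ℚᵒᵈ) :
    (tmonBot v).coeff s = if v = (OrderDual.ofDual s : ℚ) then 1 else 0 := by
  cases v with
  | bot => simp [tmonBot]
  | coe r =>
    show (tmon r).coeff s = _
    by_cases h : s = OrderDual.toDual r
    · subst h
      split
      · exact HahnSeries.coeff_single_same s 1
      · exact absurd rfl (by assumption)
    · rw [tmon, HahnSeries.coeff_single_of_ne h, if_neg]
      intro hc
      rw [WithBot.coe_inj] at hc
      exact h (by rw [hc]; rfl)

lemma tmon_ne_zero (r : ℚ) : tmon r ≠ 0 := HahnSeries.single_ne_zero one_ne_zero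

lemma order_tmon (r : ℚ) : (tmon r).order = OrderDual.toDual r :=
  HahnSeries.order_single one_ne_zero

lemma knonneg_tmonBot (v : WithBot ℚ) : Knonneg (tmonBot v) := by
  cases v with
  | bot => simp [Knonneg, tmonBot, leadCoeff]
  | coe r =>
    show Knonneg (tmon r)
    unfold Knonneg leadCoeff
    rw [order_tmon, tmon, HahnSeries.coeff_single_same]
    norm_num

lemma coeff_sum {ι : Type} (s : Finset ι) (f : ι → K) (d : ℚᵒᵈ) :
    (∑ j ∈ s, f j).coeff d = ∑ j ∈ s, (f j).coeff d := by
  classical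
  induction s using Finset.induction with
  | empty => simp
  | insert _ _ h ih => rw [Finset.sum_insert h, Finset.sum_insert h, HahnSeries.coeff_add, ih]

lemma kle_tmonBot_mono {a b : WithBot ℚ} (h : a ≤ b) : Kle (tmonBot a) (tmonBot b) := by
  rcases eq_or_lt_of_le h with rfl | hlt
  · unfold Kle
    rw [sub_self]
    simp [Knonneg, leadCoeff]
  · cases b with
    | bot => exact absurd hlt (by simp)
    | coe q =>
      unfold Kle
      apply knonneg_of_pos (OrderDual.toDual q)
      · intro s hs
        have hq : (q : WithBot ℚ) < ((OrderDual.ofDual s : ℚ) : WithBot ℚ) := by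
          exact_mod_cast hs
        rw [HahnSeries.coeff_sub, tmonBot_coeff, tmonBot_coeff,
          if_neg (by exact fun hc => absurd (hc ▸ hq) (lt_irrefl _)),
          if_neg (by exact fun hc => absurd (hc ▸ (hlt.trans hq)) (lt_irrefl _)), sub_zero]
      · have h1 : ((q:ℚ) : WithBot ℚ) = ((OrderDual.ofDual (OrderDual.toDual q) : ℚ) : WithBot ℚ) := rfl
        rw [HahnSeries.coeff_sub, tmonBot_coeff, tmonBot_coeff,
          if_pos h1, if_neg (by rw [← h1]; exact hlt.ne), sub_zero]
        norm_num

lemma tmonBot_mul (a b : WithBot ℚ) : tmonBot a * tmonBot b = tmonBot (a + b) := by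
  cases a with
  | bot =>
    show (0 : K) * _ = _
    rw [zero_mul, WithBot.bot_add]
    rfl
  | coe p =>
    cases b with
    | bot =>
      show _ * (0 : K) = _
      rw [mul_zero, WithBot.add_bot]
      rfl
    | coe q =>
      show tmon p * tmon q = tmonBot ((p : WithBot ℚ) + (q : WithBot ℚ))
      rw [← WithBot.coe_add]
      show tmon p * tmon q = tmon (p + q)
      unfold tmon
      rw [HahnSeries.single_mul_single, one_mul]
      rfl

lemma ite_nonneg' (P : Prop) [Decidable P] : (0:ℝ) ≤ if P then 1 else 0 := by
  split <;> norm_num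

lemma kle_tmonBot_sum {k : ℕ} (v : Fin k → WithBot ℚ) (v0 : WithBot ℚ)
    (h : v0 ≤ Finset.univ.sup v) : Kle (tmonBot v0) (∑ j, tmonBot (v j)) := by
  classical
  cases hM : Finset.univ.sup v with
  | bot =>
    have hv0 : v0 = ⊥ := le_bot_iff.mp (hM ▸ h)
    have hall : ∀ j : Fin k, v j = ⊥ := fun j =>
      le_bot_iff.mp (hM ▸ Finset.le_sup (Finset.mem_univ j))
    have hz : (∑ j, tmonBot (v j)) = 0 := by
      apply Finset.sum_eq_zero
      intro j _
      rw [hall j]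
      rfl
    rw [hv0, Kle, hz]
    show Knonneg ((0:K) - 0)
    rw [sub_zero]
    simp [Knonneg, leadCoeff]
  | coe m =>
    have hne : (Finset.univ : Finset (Fin k)).Nonempty := by
      rcases Finset.univ.eq_empty_or_nonempty (α := Fin k) with he | hne
      · rw [he] at hM
        simp at hM
      · exact hne
    obtain ⟨j₀, -, hj₀⟩ := Finset.exists_mem_eq_sup Finset.univ hne v
    have hj₀' : v j₀ = (m : WithBot ℚ) := by rw [← hj₀, hM]
    have hvle : ∀ j, v j ≤ (m : WithBot ℚ) := fun j =>
      hM ▸ Finset.le_sup (Finset.mem_univ j)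
    have hv0le : v0 ≤ (m : WithBot ℚ) := hM ▸ h
    have hm : ((m : ℚ) : WithBot ℚ) =
        ((OrderDual.ofDual (OrderDual.toDual m) : ℚ) : WithBot ℚ) := rfl
    -- coefficient formula
    have hco : ∀ s : ℚᵒᵈ, ((∑ j, tmonBot (v j)) - tmonBot v0).coeff s =
        (∑ j, if v j = ((OrderDual.ofDual s : ℚ) : WithBot ℚ) then (1:ℝ) else 0) -
          (if v0 = ((OrderDual.ofDual s : ℚ) : WithBot ℚ) then (1:ℝ) else 0) := by
      intro s
      rw [HahnSeries.coeff_sub, coeff_sum, tmonBot_coeff]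
      congr 1
      exact Finset.sum_congr rfl fun j _ => tmonBot_coeff (v j) s
    have h1 : ∀ s : ℚᵒᵈ, s < OrderDual.toDual m →
        ((∑ j, tmonBot (v j)) - tmonBot v0).coeff s = 0 := by
      intro s hs
      have hms : ((m : ℚ) : WithBot ℚ) < ((OrderDual.ofDual s : ℚ) : WithBot ℚ) := by
        exact_mod_cast hs
      rw [hco s, Finset.sum_eq_zero (fun j _ =>
          if_neg (fun hc => absurd (hc ▸ ((hvle j).trans_lt hms)) (lt_irrefl _))),
        if_neg (fun hc => absurd (hc ▸ (hv0le.trans_lt hms)) (lt_irrefl _)), sub_zero]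
    have hsum1 : (1:ℝ) ≤ ∑ j, if v j = ((m : ℚ) : WithBot ℚ) then (1:ℝ) else 0 := by
      have := Finset.single_le_sum
        (f := fun j => if v j = ((m : ℚ) : WithBot ℚ) then (1:ℝ) else 0)
        (fun j _ => ite_nonneg' _) (Finset.mem_univ j₀)
      simpa [hj₀'] using this
    rcases eq_or_lt_of_le hv0le with hv0 | hv0
    · -- v0 = m
      apply knonneg_of_forall (OrderDual.toDual m) h1
      · rw [hco, ← hm, if_pos hv0]
        linarith
      · intro s hs
        have hms : ((OrderDual.ofDual s : ℚ) : WithBot ℚ) < ((m : ℚ) : WithBot ℚ) := by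
          exact_mod_cast hs
        rw [hco, if_neg (fun hc => absurd (hv0 ▸ hc ▸ hms) (lt_irrefl _)), sub_zero]
        exact Finset.sum_nonneg fun j _ => ite_nonneg' _
    · -- v0 < m
      apply knonneg_of_pos (OrderDual.toDual m) h1
      rw [hco, ← hm, if_neg hv0.ne, sub_zero]
      linarith

lemma val_zero' : val 0 = ⊥ := by simp [val]

lemma val_of_ne {x : K} (hx : x ≠ 0) : val x = ((OrderDual.ofDual x.order : ℚ) : WithBot ℚ) := by
  simp [val, hx]

lemma val_tmon (c : ℚ) : val (tmon c) = (c : WithBot ℚ) := by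
  rw [val_of_ne (tmon_ne_zero c), order_tmon]
  rfl

lemma knonneg_pos {x : K} (hx : x ≠ 0) (h : Knonneg x) : 0 < leadCoeff x :=
  lt_of_le_of_ne h (Ne.symm ((HahnSeries.coeff_order_eq_zero.not.2 hx)))

lemma val_le_of_kle {x z : K} (hx : Knonneg x) (h : Kle x z) : val x ≤ val z := by
  by_contra hc
  push_neg at hc
  have hx0 : x ≠ 0 := by
    intro h0
    rw [h0, val_zero'] at hc
    exact absurd hc (by simp)
  rw [val_of_ne hx0] at hc
  -- z.coeff s = 0 for s ≤ x.order
  have hzc : ∀ s : ℚᵒᵈ, s ≤ x.order → z.coeff s = 0 := by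
    intro s hs
    by_cases hz0 : z = 0
    · simp [hz0]
    · apply HahnSeries.coeff_eq_zero_of_lt_order
      rw [val_of_ne hz0] at hc
      have : (OrderDual.ofDual z.order : ℚ) < (OrderDual.ofDual x.order : ℚ) := by
        exact_mod_cast hc
      exact lt_of_le_of_lt hs this
  have h1 : ∀ s : ℚᵒᵈ, s < x.order → (z - x).coeff s = 0 := by
    intro s hs
    rw [HahnSeries.coeff_sub, hzc s hs.le, HahnSeries.coeff_eq_zero_of_lt_order hs, sub_zero]
  have hd : (z - x).coeff x.order = - x.coeff x.order := by
    rw [HahnSeries.coeff_sub, hzc _ le_rfl, zero_sub]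
  have hpos : 0 < x.coeff x.order := knonneg_pos hx0 hx
  have hord : (z - x).order = x.order :=
    order_eq_of h1 (by rw [hd]; exact neg_ne_zero.mpr hpos.ne')
  have : leadCoeff (z - x) < 0 := by
    rw [leadCoeff, hord, hd]
    linarith
  exact absurd h (by unfold Kle Knonneg; linarith)

lemma knonneg_sq (x : K) : Knonneg (x ^ 2) := by
  by_cases hx : x = 0
  · simp [Knonneg, hx, leadCoeff]
  · unfold Knonneg leadCoeff
    rw [sq, HahnSeries.order_mul hx hx, HahnSeries.coeff_mul_order_add_order]
    exact mul_self_nonneg _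

lemma val_mul (x y : K) : val (x * y) = val x + val y := by
  by_cases hx : x = 0
  · simp [hx, val_zero']
  by_cases hy : y = 0
  · simp [hy, val_zero']
  have hxy : x * y ≠ 0 := mul_ne_zero hx hy
  rw [val_of_ne hx, val_of_ne hy, val_of_ne hxy, HahnSeries.order_mul hx hy,
    ← WithBot.coe_add]
  rfl

lemma val_add_le (x y : K) : val (x + y) ≤ max (val x) (val y) := by
  by_cases hx : x = 0
  · rw [hx, zero_add]
    exact le_max_right _ _
  by_cases hy : y = 0
  · rw [hy, add_zero]
    exact le_max_left _ _
  by_cases hxy : x + y = 0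
  · rw [hxy, val_zero']
    exact bot_le
  have hmin := HahnSeries.min_order_le_order_add (x := x) (y := y) hxy
  rw [val_of_ne hx, val_of_ne hy, val_of_ne hxy]
  rcases min_cases x.order y.order with ⟨he, -⟩ | ⟨he, -⟩ <;> rw [he] at hmin
  · refine le_trans ?_ (le_max_left _ _)
    exact_mod_cast hmin
  · refine le_trans ?_ (le_max_right _ _)
    exact_mod_cast hmin

lemma val_sum_le {ι : Type} (s : Finset ι) (f : ι → K) :
    val (∑ j ∈ s, f j) ≤ s.sup (fun j => val (f j)) := by
  classical
  induction s using Finset.induction with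
  | empty => simp [val_zero']
  | @insert a s ha ih =>
    rw [Finset.sum_insert ha, Finset.sup_insert]
    exact le_trans (val_add_le _ _) (max_le_max le_rfl ih)

lemma avg_arith {x0 x1 x2 : WithBot ℚ} (h : x0 ≤ (x1 + x2).map (fun q => q / 2)) :
    x0 + x0 ≤ x1 + x2 := by
  cases x1 with
  | bot =>
    rw [WithBot.bot_add] at h ⊢
    rw [WithBot.map_bot] at h
    rw [le_bot_iff.mp h, WithBot.bot_add]
  | coe q1 =>
    cases x2 with
    | bot =>
      rw [WithBot.add_bot] at h ⊢
      rw [WithBot.map_bot] at h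
      rw [le_bot_iff.mp h, WithBot.bot_add]
    | coe q2 =>
      cases x0 with
      | bot => rw [WithBot.bot_add]; exact bot_le
      | coe a =>
        rw [← WithBot.coe_add, WithBot.map_coe, WithBot.coe_le_coe] at h
        rw [← WithBot.coe_add, ← WithBot.coe_add, WithBot.coe_le_coe]
        linarith

lemma half_arith {a b c : WithBot ℚ} (h : a + a ≤ b + c) :
    a ≤ (b + c).map (fun q => q / 2) := by
  cases b with
  | bot =>
    rw [WithBot.bot_add] at h ⊢
    rw [WithBot.map_bot]
    cases a with
    | bot => exact le_rfl
    | coe q =>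
      rw [← WithBot.coe_add] at h
      exact absurd (le_bot_iff.mp h) (by simp)
  | coe q1 =>
    cases c with
    | bot =>
      rw [WithBot.add_bot] at h ⊢
      rw [WithBot.map_bot]
      cases a with
      | bot => exact le_rfl
      | coe q =>
        rw [← WithBot.coe_add] at h
        exact absurd (le_bot_iff.mp h) (by simp)
    | coe q2 =>
      cases a with
      | bot => exact bot_le
      | coe q =>
        rw [← WithBot.coe_add, ← WithBot.coe_add, WithBot.coe_le_coe] at h
        rw [← WithBot.coe_add, WithBot.map_coe, WithBot.coe_le_coe]
        linarith

/-- A max-average constraint on variables indexed by `Fin n`. -/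
inductive MACon (n : ℕ) where
  /-- `x i₀ ≤ max (x (idx 0), …, x (idx (k-1)))` -/
  | maxC (i₀ : Fin n) (k : ℕ) (idx : Fin k → Fin n) : MACon n
  /-- `x i₀ ≤ (x i₁ + x i₂)/2` -/
  | avgC (i₀ i₁ i₂ : Fin n) : MACon n
  /-- `x i₀ = c` for a rational constant `c` -/
  | constC (i₀ : Fin n) (c : ℚ) : MACon n

/-- Satisfaction of a max-average constraint over `ℚ ∪ {-∞}`. -/
def SatQ {n : ℕ} (x : Fin n → WithBot ℚ) : MACon n → Prop
  | .maxC i₀ _ idx => x i₀ ≤ Finset.univ.sup (fun j => x (idx j))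
  | .avgC i₀ i₁ i₂ => x i₀ ≤ (x i₁ + x i₂).map (fun q => q / 2)
  | .constC i₀ c => x i₀ = (c : WithBot ℚ)

/-- Satisfaction of the lifted constraint over the Puiseux series field. -/
def SatK {n : ℕ} (y : Fin n → K) : MACon n → Prop
  | .maxC i₀ _ idx => Kle (y i₀) (∑ j, y (idx j))
  | .avgC i₀ i₁ i₂ => Kle ((y i₀) ^ 2) (y i₁ * y i₂)
  | .constC i₀ c => y i₀ = tmon c

/-- a max-average constraint system is solvable over `ℚ ∪ {-∞}` if and only if
the lifted system is solvable in nonnegative Puiseux series. -/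
theorem maxavg_solvable_iff_lifted {n : ℕ} (cs : List (MACon n)) :
    (∃ x : Fin n → WithBot ℚ, ∀ c ∈ cs, SatQ x c) ↔
      (∃ y : Fin n → K, (∀ i, Knonneg (y i)) ∧ ∀ c ∈ cs, SatK y c) := by
  constructor
  · rintro ⟨x, hx⟩
    refine ⟨fun i => tmonBot (x i), fun i => knonneg_tmonBot _, ?_⟩
    intro c hc
    have hs := hx c hc
    cases c with
    | maxC i₀ k idx => exact kle_tmonBot_sum (fun j => x (idx j)) (x i₀) hs
    | avgC i₀ i₁ i₂ =>
      show Kle _ _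
      rw [sq, tmonBot_mul]
      show Kle _ (tmonBot (x i₁) * tmonBot (x i₂))
      rw [tmonBot_mul]
      exact kle_tmonBot_mono (avg_arith hs)
    | constC i₀ c =>
      show tmonBot (x i₀) = tmon c
      rw [hs]
      rfl
  · rintro ⟨y, hy, hsat⟩
    refine ⟨fun i => val (y i), ?_⟩
    intro c hc
    have hs := hsat c hc
    cases c with
    | maxC i₀ k idx =>
      show val (y i₀) ≤ Finset.univ.sup (fun j => val (y (idx j)))
      exact le_trans (val_le_of_kle (hy i₀) hs) (val_sum_le _ _)
    | avgC i₀ i₁ i₂ =>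
      show val (y i₀) ≤ (val (y i₁) + val (y i₂)).map (fun q => q / 2)
      have hk := val_le_of_kle (knonneg_sq (y i₀)) hs
      rw [sq, val_mul, val_mul] at hk
      exact half_arith hk
    | constC i₀ c =>
      show val (y i₀) = (c : WithBot ℚ)
      rw [hs, val_tmon]
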